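/- (Uniform boundedness of the dogleg step sizes.) If g ≠ 0 and τ ∈ (0, 1/λ_max], then for every α ∈ (0,2] the dogleg step size satisfies τ ≤ τ_α ≤ τ + 1/λ_min. In particular the step sizes τ_α are uniformly bounded by a constant depending only on Q and τ. -/

import Mathlib

open scoped RealInnerProductSpace

/-- The dogleg path: `p(α) = -τ g` for `α ∈ (0,1]`, and
`p(α) = -τ g + (α-1)(-Q⁻¹ g + τ g)` for `α ∈ (1,2]`. -/
noncomputable def doglegPath {n : ℕ} (τ : ℝ) (g : EuclideanSpace ℝ (Fin n))
    (Qinv : EuclideanSpace ℝ (Fin n) →ₗ[ℝ] EuclideanSpace ℝ (Fin n)) (α : ℝ) :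
    EuclideanSpace ℝ (Fin n) :=
  if α ≤ 1 then (-τ) • g else (-τ) • g + (α - 1) • (-(Qinv g) + τ • g)

/-- The dogleg step size `τ_α = -‖p(α)‖² / ⟨g, p(α)⟩`. -/
noncomputable def doglegTau {n : ℕ} (τ : ℝ) (g : EuclideanSpace ℝ (Fin n))
    (Qinv : EuclideanSpace ℝ (Fin n) →ₗ[ℝ] EuclideanSpace ℝ (Fin n)) (α : ℝ) : ℝ :=
  -‖doglegPath τ g Qinv α‖ ^ 2 / ⟪g, doglegPath τ g Qinv α⟫

/-- `g_α = (⟨g, p(α)⟩ / ‖p(α)‖²) p(α)`. -/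
noncomputable def doglegG {n : ℕ} (τ : ℝ) (g : EuclideanSpace ℝ (Fin n))
    (Qinv : EuclideanSpace ℝ (Fin n) →ₗ[ℝ] EuclideanSpace ℝ (Fin n)) (α : ℝ) :
    EuclideanSpace ℝ (Fin n) :=
  (⟪g, doglegPath τ g Qinv α⟫ / ‖doglegPath τ g Qinv α‖ ^ 2) • doglegPath τ g Qinv α

/-- The (shifted) quadratic model `q(x) = ⟨g, x⟩ + (1/2) xᵀ Q x`. -/
noncomputable def quadModel {n : ℕ}
    (Q : EuclideanSpace ℝ (Fin n) →ₗ[ℝ] EuclideanSpace ℝ (Fin n))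
    (g x : EuclideanSpace ℝ (Fin n)) : ℝ :=
  ⟪g, x⟫ + (1 / 2) * ⟪Q x, x⟫

/-- The surrogate `m_α(x) = ⟨g_α, x⟩ + (1/(2 τ_α)) ‖x‖²`. -/
noncomputable def doglegSurrogate {n : ℕ} (τ : ℝ) (g : EuclideanSpace ℝ (Fin n))
    (Qinv : EuclideanSpace ℝ (Fin n) →ₗ[ℝ] EuclideanSpace ℝ (Fin n)) (α : ℝ)
    (x : EuclideanSpace ℝ (Fin n)) : ℝ :=
  ⟪doglegG τ g Qinv α, x⟫ + (1 / (2 * doglegTau τ g Qinv α)) * ‖x‖ ^ 2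
set_option maxHeartbeats 1000000 in
/-- (Uniform boundedness of the dogleg step sizes.) If `g ≠ 0` and
`τ ∈ (0, 1/λ_max]`, then for every `α ∈ (0,2]` the dogleg step size satisfies
`τ ≤ τ_α ≤ τ + 1/λ_min`. -/
theorem doglegTau_bounded {n : ℕ}
    (Q Qinv : EuclideanSpace ℝ (Fin n) →ₗ[ℝ] EuclideanSpace ℝ (Fin n))
    (hQsymm : ∀ x y : EuclideanSpace ℝ (Fin n), ⟪Q x, y⟫ = ⟪x, Q y⟫)
    (hQpd : ∀ x : EuclideanSpace ℝ (Fin n), x ≠ 0 → 0 < ⟪Q x, x⟫)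
    (hinv₁ : ∀ x, Q (Qinv x) = x) (hinv₂ : ∀ x, Qinv (Q x) = x)
    (lamMax lamMin : ℝ) (hlamMaxPos : 0 < lamMax) (hlamMinPos : 0 < lamMin)
    (hRayleighMax : ∀ x : EuclideanSpace ℝ (Fin n), ⟪Q x, x⟫ ≤ lamMax * ‖x‖ ^ 2)
    (hRayleighMin : ∀ x : EuclideanSpace ℝ (Fin n), lamMin * ‖x‖ ^ 2 ≤ ⟪Q x, x⟫)
    (g : EuclideanSpace ℝ (Fin n)) (hg : g ≠ 0) (τ : ℝ)
    (hτpos : 0 < τ) (hτle : τ ≤ 1 / lamMax)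
    (α : ℝ) (hα₀ : 0 < α) (hα₂ : α ≤ 2) :
    τ ≤ doglegTau τ g Qinv α ∧ doglegTau τ g Qinv α ≤ τ + 1 / lamMin := by
  set u := Qinv g with hu_def
  have hgu : Q u = g := hinv₁ g
  have hune : u ≠ 0 := by
    intro h
    apply hg
    rw [← hgu, h, map_zero]
  set G := ‖g‖ ^ 2 with hGdef
  set U := ‖u‖ ^ 2 with hUdef
  set S := ⟪g, u⟫ with hSdef
  have hG : 0 < G := pow_pos (norm_pos_iff.mpr hg) 2
  have hU : 0 < U := pow_pos (norm_pos_iff.mpr hune) 2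
  have hSQ : S = ⟪Q u, u⟫ := by rw [hgu]
  have hSpos : 0 < S := by rw [hSQ]; exact hQpd u hune
  have hSmin : lamMin * U ≤ S := by rw [hSQ, hUdef]; exact hRayleighMin u
  have hSmax : S ≤ lamMax * U := by rw [hSQ, hUdef]; exact hRayleighMax u
  have hτmax : τ * lamMax ≤ 1 := by
    rw [le_div_iff₀ hlamMaxPos] at hτle
    linarith
  have hA : 0 < ⟪Q g, g⟫ := hQpd g hg
  set A := ⟪Q g, g⟫ with hAdef
  have hAmax : A ≤ lamMax * G := by rw [hAdef, hGdef]; exact hRayleighMax g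
  -- Cauchy–Schwarz in the Q-inner product, specialized: G² ≤ A * S
  have hQCS : G ^ 2 ≤ A * S := by
    have hw : (0 : ℝ) ≤ ⟪Q (A • u - G • g), A • u - G • g⟫ := by
      rcases eq_or_ne (A • u - G • g) 0 with h | h
      · rw [h]; simp
      · exact (hQpd _ h).le
    have hQug : ⟪Q u, g⟫ = G := by rw [hgu, hGdef, real_inner_self_eq_norm_sq]
    have hQgu : ⟪Q g, u⟫ = G := by rw [hQsymm, hgu, hGdef, real_inner_self_eq_norm_sq]
    have hexp : ⟪Q (A • u - G • g), A • u - G • g⟫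
        = A ^ 2 * S - A * G ^ 2 := by
      rw [map_sub, map_smul, map_smul]
      simp only [inner_sub_left, inner_sub_right, real_inner_smul_left,
        real_inner_smul_right, hQug, hQgu, ← hSQ, ← hAdef]
      ring
    nlinarith [hw, hexp, hA]
  have hτGS : τ * G ≤ S := by nlinarith [hQCS, hAmax, hG, hSpos, hτpos, hτmax]
  have hCS : S ^ 2 ≤ G * U := by
    have := real_inner_mul_inner_self_le g u
    rw [real_inner_self_eq_norm_sq, real_inner_self_eq_norm_sq] at this
    calc S ^ 2 = ⟪g, u⟫ * ⟪g, u⟫ := by rw [hSdef]; ring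
      _ ≤ G * U := this
  have hminSG : lamMin * S ≤ G := by nlinarith [hCS, hSmin, hSpos, hU, hG]
  have hτSU : τ * S ≤ U := by nlinarith [hSmax, hτmax, hτpos, hU, hlamMaxPos]
  have hgg : ⟪g, g⟫ = G := real_inner_self_eq_norm_sq g
  have huu : ⟪u, u⟫ = U := real_inner_self_eq_norm_sq u
  have hug : ⟪u, g⟫ = S := (real_inner_comm u g).symm
  clear_value G U S A
  by_cases h1 : α ≤ 1
  · -- Cauchy segment: p(α) = -τ g, τ_α = τ
    have hpath : doglegPath τ g Qinv α = (-τ) • g := by rw [doglegPath, if_pos h1]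
    have hip : ⟪g, doglegPath τ g Qinv α⟫ = -τ * G := by
      rw [hpath, real_inner_smul_right, hgg]
    have hnp : ‖doglegPath τ g Qinv α‖ ^ 2 = τ ^ 2 * G := by
      rw [hpath, norm_smul, mul_pow, Real.norm_eq_abs, sq_abs, hGdef]
      ring
    have htau : doglegTau τ g Qinv α = τ := by
      have hne : -τ * G < 0 := by nlinarith [mul_pos hτpos hG]
      rw [doglegTau, hip, hnp, div_eq_iff hne.ne]
      ring
    rw [htau]
    constructor
    · exact le_refl τ
    · have : 0 < 1 / lamMin := by positivity
      linarith
  · -- Dogleg segment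
    push_neg at h1
    obtain ⟨β, hβdef⟩ : ∃ b : ℝ, b = α - 1 := ⟨_, rfl⟩
    have hβ0 : 0 < β := by rw [hβdef]; linarith
    have hβ1 : β ≤ 1 := by rw [hβdef]; linarith
    have hpath : doglegPath τ g Qinv α = (-τ) • g + β • (-u + τ • g) := by
      rw [doglegPath, if_neg (not_le.mpr h1), ← hβdef]
    have hip : ⟪g, doglegPath τ g Qinv α⟫ = -(τ * (1 - β) * G + β * S) := by
      rw [hpath]
      simp only [inner_add_right, real_inner_smul_right, inner_neg_right, hgg, ← hSdef]
      ring
    have hnp : ‖doglegPath τ g Qinv α‖ ^ 2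
        = (τ * (1 - β)) ^ 2 * G + 2 * (τ * (1 - β)) * β * S + β ^ 2 * U := by
      rw [← real_inner_self_eq_norm_sq, hpath]
      simp only [inner_add_right, inner_add_left, real_inner_smul_right,
        real_inner_smul_left, inner_neg_right, inner_neg_left, hgg, huu, hug, ← hSdef]
      ring
    obtain ⟨D, hDdef⟩ : ∃ d : ℝ, d = τ * (1 - β) * G + β * S := ⟨_, rfl⟩
    obtain ⟨N, hNdef⟩ : ∃ m : ℝ, m
        = (τ * (1 - β)) ^ 2 * G + 2 * (τ * (1 - β)) * β * S + β ^ 2 * U := ⟨_, rfl⟩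
    rw [← hDdef] at hip
    rw [← hNdef] at hnp
    have h1β : 0 ≤ 1 - β := by linarith
    have hD : 0 < D := by
      rw [hDdef]
      linarith [mul_pos hβ0 hSpos, mul_nonneg (mul_nonneg hτpos.le h1β) hG.le]
    have htau : doglegTau τ g Qinv α = N / D := by
      rw [doglegTau, hip, hnp, neg_div_neg_eq]
    rw [htau]
    constructor
    · rw [le_div_iff₀ hD, hDdef, hNdef]
      linarith [mul_nonneg (mul_nonneg hβ0.le hβ0.le) (sub_nonneg.mpr hτSU),
        mul_nonneg (mul_nonneg (mul_nonneg hτpos.le hβ0.le) h1β) (sub_nonneg.mpr hτGS)]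
    · rw [div_le_iff₀ hD]
      have hp1 : 0 ≤ β * S - lamMin * β ^ 2 * U + lamMin * τ * β ^ 2 * S := by
        linarith [mul_nonneg (mul_nonneg hβ0.le (sub_nonneg.mpr hβ1)) hSpos.le,
          mul_le_mul_of_nonneg_left hSmin (sq_nonneg β),
          mul_nonneg (mul_nonneg (mul_nonneg hlamMinPos.le hτpos.le) (sq_nonneg β)) hSpos.le]
      have hp2 : 0 ≤ τ * (1 - β) * G - lamMin * τ * β * (1 - β) * S
          + lamMin * τ ^ 2 * β * (1 - β) * G := by
        linarith [mul_nonneg (mul_nonneg hτpos.le h1β) (sub_nonneg.mpr hminSG),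
          mul_nonneg (mul_nonneg (mul_nonneg (mul_nonneg hτpos.le h1β) h1β)
            hlamMinPos.le) hSpos.le,
          mul_nonneg (mul_nonneg (mul_nonneg (mul_nonneg (mul_nonneg hτpos.le hτpos.le)
            hβ0.le) h1β) hlamMinPos.le) hG.le]
      have key : lamMin * N ≤ (lamMin * τ + 1) * D := by
        rw [hNdef, hDdef]
        linarith [hp1, hp2]
      have hmul : (τ + 1 / lamMin) * D = ((lamMin * τ + 1) * D) / lamMin := by
        field_simp
      rw [hmul, le_div_iff₀ hlamMinPos]
      linarith [key]
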